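/- Let k be a commutative ring and let R be a commutative k-algebra equipped with an ℕ-grading R = ⊕_{n≥0} R_n as a k-algebra (each R_n a k-submodule with R_m·R_n ⊆ R_{m+n} and the image of k contained in R₀). Let t ∈ R₁ be a homogeneous element of degree 1. If the quotient algebra R/tR is a finitely generated k-algebra, then R is a finitely generated k-algebra. -/

import Mathlib

open DirectSum

/-- The adjoin of a set of homogeneous elements is closed under taking
homogeneous components. -/
lemma adjoin_homogeneous_decompose_mem {k R : Type*} [CommRing k] [CommRing R]
    [Algebra k R] (𝒜 : ℕ → Submodule k R) [GradedAlgebra 𝒜]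
    (S : Set R) (hS : ∀ s ∈ S, SetLike.IsHomogeneousElem 𝒜 s)
    {x : R} (hx : x ∈ Algebra.adjoin k S) (n : ℕ) :
    (DirectSum.decompose 𝒜 x n : R) ∈ Algebra.adjoin k S := by
  have hx' : x ∈ Submodule.span k (Submonoid.closure S : Set R) := by
    rw [← Algebra.adjoin_eq_span]; exact hx
  clear hx
  induction hx' using Submodule.span_induction generalizing n with
  | mem w hw =>
      have hw' : w ∈ Algebra.adjoin k S ∧ SetLike.IsHomogeneousElem 𝒜 w := by
        induction hw using Submonoid.closure_induction with
        | mem s hs => exact ⟨Algebra.subset_adjoin hs, hS s hs⟩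
        | one => exact ⟨one_mem _, ⟨0, SetLike.GradedOne.one_mem⟩⟩
        | mul a b _ _ ha hb =>
            refine ⟨mul_mem ha.1 hb.1, ?_⟩
            obtain ⟨i, hi⟩ := ha.2; obtain ⟨j, hj⟩ := hb.2
            exact ⟨i + j, SetLike.GradedMul.mul_mem hi hj⟩
      obtain ⟨hwA, i, hi⟩ := hw'
      by_cases h : i = n
      · subst h; rw [DirectSum.decompose_of_mem_same 𝒜 hi]; exact hwA
      · rw [DirectSum.decompose_of_mem_ne 𝒜 hi h]; exact zero_mem _
  | zero => simp only [DirectSum.decompose_zero]; simpa using zero_mem _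
  | add a b _ _ ha hb =>
      rw [DirectSum.decompose_add]
      simpa using add_mem (ha n) (hb n)
  | smul c a _ ha =>
      rw [DirectSum.decompose_smul]
      simpa [DirectSum.smul_apply] using Subalgebra.smul_mem _ (ha n) c

/-- Let `k` be a commutative ring and `R` a commutative `k`-algebra with an
`ℕ`-grading `R = ⊕ₙ Rₙ` by `k`-submodules (so `Rₘ·Rₙ ⊆ R_{m+n}` and the image
of `k` lies in `R₀`). Let `t ∈ R₁`. If `R/tR` is a finitely generated
`k`-algebra, then `R` is a finitely generated `k`-algebra. -/
theorem finiteType_of_quotient_by_degree_one (k R : Type*) [CommRing k] [CommRing R]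
    [Algebra k R] (𝒜 : ℕ → Submodule k R) [GradedAlgebra 𝒜]
    (t : R) (ht : t ∈ 𝒜 1)
    (hquot : Algebra.FiniteType k (R ⧸ Ideal.span {t})) :
    Algebra.FiniteType k R := by
  classical
  set I : Ideal R := Ideal.span {t} with hI
  obtain ⟨T, hT⟩ := hquot
  -- lift the generators of the quotient
  have hsurj : Function.Surjective (Ideal.Quotient.mkₐ k I) :=
    Ideal.Quotient.mk_surjective
  set g : (R ⧸ I) → R := Function.surjInv hsurj with hg
  have hgq : ∀ q, Ideal.Quotient.mkₐ k I (g q) = q := fun q =>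
    Function.surjInv_eq hsurj q
  -- take all homogeneous components of the lifts
  set S : Finset R := T.biUnion (fun q =>
    (DirectSum.decompose 𝒜 (g q)).support.image
      (fun n => (DirectSum.decompose 𝒜 (g q) n : R))) with hSdef
  have hS : ∀ s ∈ (S : Set R), SetLike.IsHomogeneousElem 𝒜 s := by
    intro s hs
    simp only [hSdef, Finset.coe_biUnion, Set.mem_iUnion, Finset.coe_image,
      Set.mem_image, Finset.mem_coe] at hs
    obtain ⟨q, _, n, _, rfl⟩ := hs
    exact ⟨n, SetLike.coe_mem _⟩
  -- the lifts belong to `adjoin k S`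
  have hglift : ∀ q ∈ T, g q ∈ Algebra.adjoin k (S : Set R) := by
    intro q hq
    rw [← DirectSum.sum_support_decompose 𝒜 (g q)]
    refine Subalgebra.sum_mem _ fun n hn => Algebra.subset_adjoin ?_
    simp only [hSdef, Finset.coe_biUnion, Set.mem_iUnion, Finset.coe_image,
      Set.mem_image, Finset.mem_coe]
    exact ⟨q, hq, n, hn, rfl⟩
  -- every element of `R` is `a + t*y` with `a ∈ adjoin k S`
  have hlift : ∀ x : R, ∃ a ∈ Algebra.adjoin k (S : Set R), ∃ y : R, x = a + t * y := by
    intro x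
    have : Ideal.Quotient.mkₐ k I x ∈
        (Algebra.adjoin k (S : Set R)).map (Ideal.Quotient.mkₐ k I) := by
      have hle : Algebra.adjoin k (T : Set (R ⧸ I)) ≤
          (Algebra.adjoin k (S : Set R)).map (Ideal.Quotient.mkₐ k I) := by
        rw [Algebra.adjoin_le_iff]
        intro q hq
        exact ⟨g q, hglift q hq, hgq q⟩
      exact hle (hT ▸ Algebra.mem_top)
    obtain ⟨a, ha, hax⟩ := this
    have : x - a ∈ I := by
      rw [← Ideal.Quotient.eq_zero_iff_mem, map_sub]
      have : (Ideal.Quotient.mk I) a = (Ideal.Quotient.mk I) x := hax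
      rw [this]; ring
    rw [hI, Ideal.mem_span_singleton'] at this
    obtain ⟨y, hy⟩ := this
    exact ⟨a, ha, y, by rw [mul_comm] at hy; linear_combination -hy⟩
  -- main induction: every homogeneous element lies in `adjoin k (insert t S)`
  set A' : Subalgebra k R := Algebra.adjoin k (insert t (S : Set R)) with hA'
  have hSA : Algebra.adjoin k (S : Set R) ≤ A' :=
    Algebra.adjoin_mono (Set.subset_insert _ _)
  have htA : t ∈ A' := Algebra.subset_adjoin (Set.mem_insert _ _)
  have main : ∀ n : ℕ, ∀ x ∈ 𝒜 n, x ∈ A' := by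
    intro n
    induction n using Nat.strong_induction_on with
    | _ n ih =>
      intro x hx
      obtain ⟨a, ha, y, hxy⟩ := hlift x
      have hxd : x = (DirectSum.decompose 𝒜 a n : R) + (DirectSum.decompose 𝒜 (t * y) n : R) := by
        conv_lhs => rw [← DirectSum.decompose_of_mem_same 𝒜 hx, hxy]
        rw [DirectSum.decompose_add]
        simp
      have haA : (DirectSum.decompose 𝒜 a n : R) ∈ A' :=
        hSA (adjoin_homogeneous_decompose_mem 𝒜 _ hS ha n)
      rcases n with _ | m
      · rw [hxd, DirectSum.coe_decompose_mul_of_left_mem_of_not_le 𝒜 ht (by omega)]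
        simpa using haA
      · rw [hxd, DirectSum.coe_decompose_mul_of_left_mem_of_le 𝒜 ht (by omega)]
        have : m + 1 - 1 = m := by omega
        rw [this]
        exact add_mem haA (mul_mem htA
          (ih m (by omega) _ (SetLike.coe_mem _)))
  refine ⟨insert t S, ?_⟩
  rw [eq_top_iff]
  intro x _
  rw [← DirectSum.sum_support_decompose 𝒜 x]
  refine Subalgebra.sum_mem _ fun n _ => ?_
  have := main n _ (SetLike.coe_mem (DirectSum.decompose 𝒜 x n))
  simpa [hA', Finset.coe_insert] using this
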